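/- For natural numbers i < j, set p := the number obtained from j by clearing all bits strictly below the highest set bit of (i XOR j) (i.e., p = j AND NOT(2^(log2 (i XOR j)) - 1) restricted to finitely many bits, equivalently p = j - (j mod 2^(Nat.log2 (Nat.xor i j)))). Then i + 1 ≤ p ≤ j. -/

import Mathlib

lemma div_eq_of_xor_lt {x y n : ℕ} (h : x ^^^ y < 2 ^ n) : x / 2 ^ n = y / 2 ^ n := by
  rw [← Nat.shiftRight_eq_div_pow, ← Nat.shiftRight_eq_div_pow]
  apply Nat.eq_of_testBit_eq
  intro m
  rw [Nat.testBit_shiftRight, Nat.testBit_shiftRight]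
  have hb : (x ^^^ y).testBit (n + m) = false :=
    Nat.testBit_lt_two_pow (lt_of_lt_of_le h (Nat.pow_le_pow_right (by norm_num) (Nat.le_add_right _ _)))
  rw [Nat.testBit_xor] at hb
  cases hx : x.testBit (n + m) <;> cases hy : y.testBit (n + m) <;> simp_all

theorem mask_leading_bit_between (i j : ℕ) (hij : i < j)
    (p : ℕ) (hp : p = j - j % 2 ^ (Nat.log2 (i ^^^ j))) :
    i + 1 ≤ p ∧ p ≤ j := by
  set k := Nat.log2 (i ^^^ j) with hk
  have h0 : i ^^^ j ≠ 0 := fun h => absurd (xor_eq_zero_iff.mp h) (by omega)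
  have hx1 : 2 ^ k ≤ i ^^^ j := Nat.log2_self_le h0
  have hx2 : i ^^^ j < 2 ^ (k + 1) := Nat.lt_log2_self
  have hpow : (2:ℕ) ^ (k+1) = 2^k * 2 := by ring
  have hq : i / 2 ^ (k+1) = j / 2 ^ (k+1) := div_eq_of_xor_lt hx2
  -- bit k of xor is 1
  have hdiv1 : (i ^^^ j) / 2 ^ k = 1 := by
    have h1 : 1 ≤ (i ^^^ j) / 2 ^ k := (Nat.le_div_iff_mul_le (Nat.pow_pos (by norm_num))).mpr (by omega)
    have h2 : (i ^^^ j) / 2 ^ k < 2 := (Nat.div_lt_iff_lt_mul (Nat.pow_pos (by norm_num))).mpr (by omega)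
    omega
  have hbit : i / 2 ^ k % 2 ≠ j / 2 ^ k % 2 := by
    have := Nat.testBit_xor i j k
    rw [Nat.testBit_eq_decide_div_mod_eq, Nat.testBit_eq_decide_div_mod_eq, Nat.testBit_eq_decide_div_mod_eq, hdiv1] at this
    simp only [Nat.one_mod] at this
    by_cases h1 : i / 2 ^ k % 2 = 1 <;> by_cases h2 : j / 2 ^ k % 2 = 1 <;> simp_all <;> omega
  have hmi : i % 2 ^ (k+1) = i % 2 ^ k + 2 ^ k * (i / 2 ^ k % 2) := by
    rw [hpow]; exact Nat.mod_mul
  have hmj : j % 2 ^ (k+1) = j % 2 ^ k + 2 ^ k * (j / 2 ^ k % 2) := by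
    rw [hpow]; exact Nat.mod_mul
  have hi := Nat.div_add_mod i (2 ^ (k+1))
  have hj := Nat.div_add_mod j (2 ^ (k+1))
  have hik : i % 2 ^ k < 2 ^ k := Nat.mod_lt _ (Nat.pow_pos (by norm_num))
  have hjk : j % 2 ^ k < 2 ^ k := Nat.mod_lt _ (Nat.pow_pos (by norm_num))
  have hi2 : i / 2 ^ k % 2 < 2 := Nat.mod_lt _ (by norm_num)
  have hj2 : j / 2 ^ k % 2 < 2 := Nat.mod_lt _ (by norm_num)
  have hjle : j % 2 ^ k ≤ j := Nat.mod_le _ _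
  have hp0 : (0:ℕ) < 2 ^ k := Nat.pow_pos (by norm_num)
  have hlm : 2 ^ (k+1) * (i / 2 ^ (k+1)) = 2 ^ (k+1) * (j / 2 ^ (k+1)) := by rw [hq]
  have hcase : (i / 2 ^ k % 2 = 0 ∧ j / 2 ^ k % 2 = 1) ∨
      (i / 2 ^ k % 2 = 1 ∧ j / 2 ^ k % 2 = 0) := by omega
  rcases hcase with ⟨h1, h2⟩ | ⟨h1, h2⟩ <;> rw [h1] at hmi <;> rw [h2] at hmj <;>
    simp only [Nat.mul_zero, Nat.mul_one, Nat.add_zero] at hmi hmj <;> omega
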